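/- Under the gaps-and-weight setup, fix an index k ∈ {1, …, n} such that G_k is nonempty. Then there exists a real polynomial p of degree at most n − 1 such that I_l(p) = δ_{kl} for every l = 1, …, n, i.e. the signed integrals of p(t)/w(t) over the pieces of G_l vanish for all l ≠ k and equal 1 for l = k. -/

import Mathlib

open Finset

/-- The weight `w(t) = √(−∏_{i=0}^{2n}(t − bᵢ))` on the gaps of the hyperelliptic curve. -/
noncomputable def gapWeight (n : ℕ) (b : Fin (2 * n + 1) → ℝ) (t : ℝ) : ℝ :=
  Real.sqrt (-∏ i, (t - b i))

/-- The signed integral `I_j(f) = ε_j · Σ_{(c,d) ∈ G_j} ∫_c^d f(t)/w(t) dt` over the pieces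
of the collection of paths `G_j` lying in gap `j`. -/
noncomputable def gapIntegral (n : ℕ) (b : Fin (2 * n + 1) → ℝ) (ε : Fin n → ℝ)
    (G : Fin n → List (ℝ × ℝ)) (j : Fin n) (f : ℝ → ℝ) : ℝ :=
  ε j * ((G j).map fun pr => ∫ t in pr.1..pr.2, f t / gapWeight n b t).sum

/- ### Auxiliary lemmas -/

private lemma nd_list_sum_swap {α ι : Type*} [Fintype ι] (L : List α) (g : ι → α → ℝ) :
    (L.map fun x => ∑ i, g i x).sum = ∑ i, (L.map fun x => g i x).sum := by
  induction L with
  | nil => simp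
  | cons x xs ih => simp [ih, Finset.sum_add_distrib]

private lemma nd_list_map_mul_left {α : Type*} (L : List α) (f : α → ℝ) (c : ℝ) :
    (L.map fun x => c * f x).sum = c * (L.map f).sum := by
  induction L with
  | nil => simp
  | cons x xs ih => simp [ih, mul_add]

private lemma nd_list_sum_neg : ∀ (L : List ℝ), (∀ x ∈ L, x < 0) → L ≠ [] → L.sum < 0
  | [], _, h => absurd rfl h
  | x :: xs, h, _ => by
    rcases eq_or_ne xs [] with rfl | hxs
    · simpa using h x (by simp)
    · have h1 := nd_list_sum_neg xs (fun y hy => h y (List.mem_cons_of_mem _ hy)) hxs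
      have hx := h x List.mem_cons_self
      simp only [List.sum_cons]
      linarith

private lemma nd_card_filter_le_val (m k : ℕ) :
    ((Finset.univ : Finset (Fin m)).filter fun i : Fin m => k ≤ (i : ℕ)).card = m - k := by
  rw [← Nat.card_Ico k m]
  apply Finset.card_bij (fun (i : Fin m) _ => (i : ℕ))
  · intro i hi
    simp only [Finset.mem_filter, Finset.mem_univ, true_and] at hi
    exact Finset.mem_Ico.mpr ⟨hi, i.isLt⟩
  · intro i _ j _ h
    exact Fin.val_injective h
  · intro j hj
    rw [Finset.mem_Ico] at hj
    exact ⟨⟨j, hj.2⟩, by simp [hj.1], rfl⟩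

private lemma nd_prod_pos_of_neg_of_even {ι : Type*} {s : Finset ι} {f : ι → ℝ}
    (h : ∀ i ∈ s, f i < 0) (hc : Even s.card) : 0 < ∏ i ∈ s, f i := by
  have h1 : ∏ i ∈ s, f i = (-1 : ℝ) ^ s.card * ∏ i ∈ s, -f i := by
    rw [← Finset.prod_const, ← Finset.prod_mul_distrib]
    simp
  rw [h1, hc.neg_one_pow, one_mul]
  exact Finset.prod_pos fun i hi => neg_pos.mpr (h i hi)

open MeasureTheory in
private lemma nd_integrable_div_sqrt {F q p : ℝ → ℝ} {a d : ℝ} (had : a < d)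
    (hq : Continuous q) (hp : Continuous p)
    (hfac : ∀ t, F t = (t - a) * (d - t) * q t)
    (hqpos : ∀ t ∈ Set.Icc a d, 0 < q t) :
    IntervalIntegrable (fun t => p t / Real.sqrt (F t)) volume a d := by
  have hFc : Continuous F := by
    rw [show F = fun t => (t - a) * (d - t) * q t from funext hfac]
    fun_prop
  -- min of q and max of |p| on the compact interval
  obtain ⟨x₀, hx₀, hmin⟩ := isCompact_Icc.exists_isMinOn (Set.nonempty_Icc.mpr had.le)
    hq.continuousOn (s := Set.Icc a d)
  obtain ⟨x₁, hx₁, hmax⟩ := isCompact_Icc.exists_isMaxOn (Set.nonempty_Icc.mpr had.le)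
    (hp.abs.continuousOn) (s := Set.Icc a d)
  set m : ℝ := q x₀ with hm
  have hm0 : 0 < m := hqpos x₀ hx₀
  have hmq : ∀ t ∈ Set.Icc a d, m ≤ q t := fun t ht => hmin ht
  set Mp : ℝ := |p x₁| with hMp
  have hMp0 : 0 ≤ Mp := abs_nonneg _
  have hMple : ∀ t ∈ Set.Icc a d, |p t| ≤ Mp := fun t ht => hmax ht
  set s : ℝ := (a + d) / 2 with hs
  have has : a < s := by simp only [hs]; linarith
  have hsd : s < d := by simp only [hs]; linarith
  set K : ℝ := (d - a) / 2 * m with hK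
  have hK0 : 0 < K := by
    apply mul_pos _ hm0
    linarith
  set C : ℝ := Mp / Real.sqrt K with hC
  have hC0 : 0 ≤ C := div_nonneg hMp0 (Real.sqrt_nonneg _)
  have hmeas : ∀ u v : ℝ, AEStronglyMeasurable (fun t => p t / Real.sqrt (F t))
      (volume.restrict (Set.uIoc u v)) :=
    fun u v => (hp.measurable.div
      ((Real.continuous_sqrt.comp hFc).measurable)).aestronglyMeasurable.restrict
  -- key pointwise bound
  have hbound : ∀ x ∈ Set.Icc a d, ∀ z : ℝ, 0 < z →
      z * K ≤ F x → |p x / Real.sqrt (F x)| ≤ C * Real.sqrt z⁻¹ := by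
    intro x hx z hz hzF
    have hsz : 0 < Real.sqrt (z * K) := Real.sqrt_pos.mpr (mul_pos hz hK0)
    have h1 : Real.sqrt (z * K) ≤ Real.sqrt (F x) := Real.sqrt_le_sqrt hzF
    have h2 : |p x / Real.sqrt (F x)| = |p x| / Real.sqrt (F x) := by
      rw [abs_div, abs_of_nonneg (Real.sqrt_nonneg _)]
    rw [h2]
    have h3 : |p x| / Real.sqrt (F x) ≤ Mp / Real.sqrt (z * K) :=
      div_le_div₀ hMp0 (hMple x hx) hsz h1
    refine h3.trans (le_of_eq ?_)
    have hz' : Real.sqrt z ≠ 0 := ne_of_gt (Real.sqrt_pos.mpr hz)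
    have hK' : Real.sqrt K ≠ 0 := ne_of_gt (Real.sqrt_pos.mpr hK0)
    rw [Real.sqrt_mul hz.le, Real.sqrt_inv, hC]
    field_simp
  have hrpow : ∀ x : ℝ, 0 < x → x ^ (-(1/2) : ℝ) = Real.sqrt x⁻¹ := by
    intro x hx
    rw [Real.sqrt_inv, Real.sqrt_eq_rpow, ← Real.rpow_neg hx.le]
  have hleft : IntervalIntegrable (fun t => p t / Real.sqrt (F t)) volume a s := by
    have h0 : IntervalIntegrable (fun x : ℝ => x ^ (-(1/2) : ℝ)) volume (a - a) (s - a) :=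
      intervalIntegral.intervalIntegrable_rpow' (by norm_num)
    have h1 := (h0.comp_sub_right a).const_mul C
    have h2 : IntervalIntegrable (fun x => C * (x - a) ^ (-(1/2) : ℝ)) volume a s := by
      simpa using h1
    refine h2.mono_fun (hmeas a s) ?_
    rw [Set.uIoc_of_le has.le]
    refine (MeasureTheory.ae_restrict_iff' measurableSet_Ioc).mpr (MeasureTheory.ae_of_all _ ?_)
    intro x hx
    have hxa : 0 < x - a := by linarith [hx.1]
    have hxIcc : x ∈ Set.Icc a d := ⟨hx.1.le, le_trans hx.2 hsd.le⟩
    have hFx : (x - a) * K ≤ F x := by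
      rw [hfac x, hK]
      have hq1 := hmq x hxIcc
      have hdx : (d - a)/2 ≤ d - x := by
        have := hx.2
        simp only [hs] at this
        linarith
      have hstep : (d - a)/2 * m ≤ (d - x) * q x :=
        mul_le_mul hdx hq1 hm0.le (by linarith)
      calc (x - a) * ((d - a)/2 * m) ≤ (x - a) * ((d - x) * q x) :=
            mul_le_mul_of_nonneg_left hstep hxa.le
        _ = (x - a) * (d - x) * q x := by ring
    have hb2 := hbound x hxIcc (x - a) hxa hFx
    show ‖p x / Real.sqrt (F x)‖ ≤ ‖C * ((x - a) ^ (-(1/2) : ℝ))‖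
    simp only [Real.norm_eq_abs]
    rw [abs_of_nonneg (mul_nonneg hC0 (Real.rpow_nonneg hxa.le _)), hrpow _ hxa]
    exact hb2
  have hright : IntervalIntegrable (fun t => p t / Real.sqrt (F t)) volume s d := by
    have h0 : IntervalIntegrable (fun x : ℝ => x ^ (-(1/2) : ℝ)) volume (d - d) (d - s) :=
      intervalIntegral.intervalIntegrable_rpow' (by norm_num)
    have h1 := ((h0.comp_sub_left d).const_mul C).symm
    have h2 : IntervalIntegrable (fun x => C * (d - x) ^ (-(1/2) : ℝ)) volume s d := by
      simpa using h1
    refine h2.mono_fun (hmeas s d) ?_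
    rw [Set.uIoc_of_le hsd.le]
    refine (MeasureTheory.ae_restrict_iff' measurableSet_Ioc).mpr (MeasureTheory.ae_of_all _ ?_)
    intro x hx
    rcases eq_or_lt_of_le hx.2 with heq | hxd
    · have hF0 : F x = 0 := by rw [hfac, heq]; ring
      show ‖p x / Real.sqrt (F x)‖ ≤ ‖C * ((d - x) ^ (-(1/2) : ℝ))‖
      simp [hF0]
      positivity
    have hdx : 0 < d - x := by linarith
    have hxIcc : x ∈ Set.Icc a d := ⟨le_trans has.le hx.1.le, hx.2⟩
    have hFx : (d - x) * K ≤ F x := by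
      rw [hfac x, hK]
      have hq1 := hmq x hxIcc
      have hxa : (d - a)/2 ≤ x - a := by
        have := hx.1
        simp only [hs] at this
        linarith
      have hstep : (d - a)/2 * m ≤ (x - a) * q x :=
        mul_le_mul hxa hq1 hm0.le (by linarith)
      calc (d - x) * ((d - a)/2 * m) ≤ (d - x) * ((x - a) * q x) :=
            mul_le_mul_of_nonneg_left hstep hdx.le
        _ = (x - a) * (d - x) * q x := by ring
    have hb2 := hbound x hxIcc (d - x) hdx hFx
    show ‖p x / Real.sqrt (F x)‖ ≤ ‖C * ((d - x) ^ (-(1/2) : ℝ))‖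
    simp only [Real.norm_eq_abs]
    rw [abs_of_nonneg (mul_nonneg hC0 (Real.rpow_nonneg hdx.le _)), hrpow _ hdx]
    exact hb2
  exact hleft.trans hright

/-- Real-integral form of the paper's non-degeneration Lemma: if `G_k` is nonempty, there
is a polynomial `p` of degree at most `n − 1` with `I_l(p) = δ_{kl}` for all `l`. -/
theorem nondegeneration_lemma (n : ℕ) (hn : 1 ≤ n)
    (b : Fin (2 * n + 1) → ℝ) (hb0 : b 0 = 0) (hb : StrictMono b)
    (ε : Fin n → ℝ) (hε : ∀ j, ε j = 1 ∨ ε j = -1)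
    (G : Fin n → List (ℝ × ℝ))
    (hG : ∀ j : Fin n, ∀ pr ∈ G j,
      b ⟨2 * (j : ℕ) + 1, by omega⟩ ≤ pr.1 ∧ pr.1 < pr.2 ∧
        pr.2 ≤ b ⟨2 * (j : ℕ) + 2, by omega⟩)
    (k : Fin n) (hk : G k ≠ []) :
    ∃ P : Polynomial ℝ, P.natDegree ≤ n - 1 ∧
      ∀ l : Fin n, gapIntegral n b ε G l (fun t => P.eval t) =
        if l = k then 1 else 0 := by
  classical
  set F : ℝ → ℝ := fun t => -∏ i, (t - b i) with hF
  have hwF : ∀ t, gapWeight n b t = Real.sqrt (F t) := fun t => rfl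
  have hlt1 : ∀ l : Fin n, 2 * (l : ℕ) + 1 < 2 * n + 1 := fun l => by have := l.isLt; omega
  have hlt2 : ∀ l : Fin n, 2 * (l : ℕ) + 2 < 2 * n + 1 := fun l => by have := l.isLt; omega
  set ia : Fin n → Fin (2 * n + 1) := fun l => ⟨2 * (l : ℕ) + 1, hlt1 l⟩ with hia
  set idd : Fin n → Fin (2 * n + 1) := fun l => ⟨2 * (l : ℕ) + 2, hlt2 l⟩ with hidd
  set a : Fin n → ℝ := fun l => b (ia l) with haa
  set d : Fin n → ℝ := fun l => b (idd l) with hdd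
  have hval1 : ∀ l : Fin n, ((ia l : Fin (2 * n + 1)) : ℕ) = 2 * (l : ℕ) + 1 := fun l => rfl
  have hval2 : ∀ l : Fin n, ((idd l : Fin (2 * n + 1)) : ℕ) = 2 * (l : ℕ) + 2 := fun l => rfl
  have had : ∀ l, a l < d l := fun l => hb (by rw [Fin.lt_def, hval1, hval2]; omega)
  have hGa : ∀ l : Fin n, ∀ pr ∈ G l, a l ≤ pr.1 ∧ pr.1 < pr.2 ∧ pr.2 ≤ d l := fun l pr h => hG l pr h
  set s₀ : Fin n → Finset (Fin (2 * n + 1)) := fun l => (Finset.univ.erase (ia l)).erase (idd l) with hs₀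
  set q : Fin n → ℝ → ℝ := fun l t => ∏ i ∈ s₀ l, (t - b i) with hq
  have hq_cont : ∀ l, Continuous (q l) := by
    intro l
    apply continuous_finset_prod
    intro i _
    fun_prop
  have hfac : ∀ l t, F t = (t - a l) * (d l - t) * q l t := by
    intro l t
    have h1 : idd l ∈ Finset.univ.erase (ia l) := by
      refine Finset.mem_erase.mpr ⟨?_, Finset.mem_univ _⟩
      intro hEq
      have hvv : ((idd l : Fin (2 * n + 1)) : ℕ) = ((ia l : Fin (2 * n + 1)) : ℕ) := by rw [hEq]
      rw [hval1, hval2] at hvv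
      omega
    have h2 : ∏ i, (t - b i) = (t - b (ia l)) * ∏ i ∈ Finset.univ.erase (ia l), (t - b i) :=
      (Finset.mul_prod_erase _ _ (Finset.mem_univ _)).symm
    have h3 : ∏ i ∈ Finset.univ.erase (ia l), (t - b i) =
        (t - b (idd l)) * ∏ i ∈ s₀ l, (t - b i) :=
      (Finset.mul_prod_erase _ _ h1).symm
    show -∏ i, (t - b i) = _
    rw [h2, h3]
    show -((t - a l) * ((t - d l) * q l t)) = _
    ring
  have hqpos : ∀ l, ∀ t ∈ Set.Icc (a l) (d l), 0 < q l t := by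
    intro l t ht
    show 0 < ∏ i ∈ s₀ l, (t - b i)
    rw [← Finset.prod_filter_mul_prod_filter_not (s₀ l)
      (fun i : Fin (2 * n + 1) => 2 * (l : ℕ) + 3 ≤ (i : ℕ)) (fun i => t - b i)]
    apply mul_pos
    · apply nd_prod_pos_of_neg_of_even
      · intro i hi
        simp only [Finset.mem_filter] at hi
        have hlt : idd l < i := by
          rw [Fin.lt_def, hval2]
          omega
        have hbi := hb hlt
        have ht2 := ht.2
        simp only [hdd] at ht2
        linarith
      · have hfe : (s₀ l).filter (fun i : Fin (2 * n + 1) => 2 * (l : ℕ) + 3 ≤ (i : ℕ)) =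
            Finset.univ.filter (fun i : Fin (2 * n + 1) => 2 * (l : ℕ) + 3 ≤ (i : ℕ)) := by
          ext i
          rw [Finset.mem_filter, Finset.mem_filter]
          constructor
          · rintro ⟨_, h3⟩; exact ⟨Finset.mem_univ _, h3⟩
          · rintro ⟨_, h3⟩
            refine ⟨Finset.mem_erase.mpr ⟨?_, Finset.mem_erase.mpr ⟨?_, Finset.mem_univ _⟩⟩, h3⟩
            · intro hEq
              have hvv : (i : ℕ) = 2 * (l : ℕ) + 2 := by rw [hEq, hval2]
              omega
            · intro hEq
              have hvv : (i : ℕ) = 2 * (l : ℕ) + 1 := by rw [hEq, hval1]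
              omega
        rw [hfe, nd_card_filter_le_val]
        exact ⟨n - (l : ℕ) - 1, by have := l.isLt; omega⟩
    · apply Finset.prod_pos
      intro i hi
      rw [Finset.mem_filter] at hi
      obtain ⟨hi1, hi2⟩ := hi
      have h4 := Finset.mem_erase.mp hi1
      have h5 := Finset.mem_erase.mp h4.2
      have hv2 : (i : ℕ) ≠ 2 * (l : ℕ) + 2 := fun h => h4.1 (Fin.ext (by rw [hval2]; exact h))
      have hv1 : (i : ℕ) ≠ 2 * (l : ℕ) + 1 := fun h => h5.1 (Fin.ext (by rw [hval1]; exact h))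
      have hlt : i < ia l := by
        rw [Fin.lt_def, hval1]
        omega
      have hbi := hb hlt
      have ht1 := ht.1
      simp only [haa] at ht1
      linarith
  have hFpos : ∀ l, ∀ t ∈ Set.Ioo (a l) (d l), 0 < F t := by
    intro l t ht
    rw [hfac l t]
    have h1 := hqpos l t ⟨ht.1.le, ht.2.le⟩
    have h2 : 0 < t - a l := by linarith [ht.1]
    have h3 : 0 < d l - t := by linarith [ht.2]
    exact mul_pos (mul_pos h2 h3) h1
  have hwef : ∀ p : ℝ → ℝ, (fun t => p t / gapWeight n b t) = fun t => p t / Real.sqrt (F t) :=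
    fun p => rfl
  have hIntGap : ∀ (l : Fin n) (p : ℝ → ℝ), Continuous p →
      IntervalIntegrable (fun t => p t / gapWeight n b t) MeasureTheory.volume (a l) (d l) := by
    intro l p hp
    rw [hwef]
    exact nd_integrable_div_sqrt (had l) (hq_cont l) hp (hfac l) (hqpos l)
  have hIntPiece : ∀ l : Fin n, ∀ pr ∈ G l, ∀ p : ℝ → ℝ, Continuous p →
      IntervalIntegrable (fun t => p t / gapWeight n b t) MeasureTheory.volume pr.1 pr.2 := by
    intro l pr hpr p hp
    obtain ⟨h1, h2, h3⟩ := hGa l pr hpr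
    refine (hIntGap l p hp).mono_set (Set.uIcc_subset_uIcc ?_ ?_)
    · rw [Set.uIcc_of_le (had l).le]
      exact ⟨h1, le_trans h2.le h3⟩
    · rw [Set.uIcc_of_le (had l).le]
      exact ⟨le_trans h1 h2.le, h3⟩
  have hPosPiece : ∀ l : Fin n, ∀ pr ∈ G l, ∀ p : ℝ → ℝ, Continuous p →
      (∀ t ∈ Set.Ioo (a l) (d l), 0 < p t) →
      0 < ∫ t in pr.1..pr.2, p t / gapWeight n b t := by
    intro l pr hpr p hp hppos
    obtain ⟨h1, h2, h3⟩ := hGa l pr hpr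
    apply intervalIntegral.intervalIntegral_pos_of_pos_on (hIntPiece l pr hpr p hp)
    · intro x hx
      have hxI : x ∈ Set.Ioo (a l) (d l) := ⟨lt_of_le_of_lt h1 hx.1, lt_of_lt_of_le hx.2 h3⟩
      have hw : 0 < gapWeight n b x := by
        rw [hwF]
        exact Real.sqrt_pos.mpr (hFpos l x hxI)
      exact div_pos (hppos x hxI) hw
    · exact h2
  -- existence of a root in a gap with vanishing integral
  have hroot : ∀ (P : Polynomial ℝ) (l : Fin n), G l ≠ [] →
      gapIntegral n b ε G l (fun t => P.eval t) = 0 →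
      ∃ t ∈ Set.Ioo (a l) (d l), P.eval t = 0 := by
    intro P l hGl hI0
    by_contra hno
    push_neg at hno
    have hsign : (∀ t ∈ Set.Ioo (a l) (d l), 0 < P.eval t) ∨
        (∀ t ∈ Set.Ioo (a l) (d l), P.eval t < 0) := by
      by_contra hcon
      push_neg at hcon
      obtain ⟨⟨t₁, ht₁, ht₁'⟩, ⟨t₂, ht₂, ht₂'⟩⟩ := hcon
      have h₁ : P.eval t₁ < 0 := lt_of_le_of_ne ht₁' (hno t₁ ht₁)
      have h₂ : 0 < P.eval t₂ := lt_of_le_of_ne ht₂' (fun h => hno t₂ ht₂ h.symm)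
      rcases le_total t₁ t₂ with hle | hle
      · obtain ⟨x, hx, hfx⟩ := intermediate_value_Icc hle P.continuous.continuousOn
          (Set.mem_Icc.mpr ⟨h₁.le, h₂.le⟩)
        have hxI : x ∈ Set.Ioo (a l) (d l) :=
          ⟨lt_of_lt_of_le ht₁.1 hx.1, lt_of_le_of_lt hx.2 ht₂.2⟩
        exact hno x hxI hfx
      · obtain ⟨x, hx, hfx⟩ := intermediate_value_Icc' hle P.continuous.continuousOn
          (Set.mem_Icc.mpr ⟨h₁.le, h₂.le⟩)
        have hxI : x ∈ Set.Ioo (a l) (d l) :=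
          ⟨lt_of_lt_of_le ht₂.1 hx.1, lt_of_le_of_lt hx.2 ht₁.2⟩
        exact hno x hxI hfx
    have hmapne : (G l).map (fun pr => ∫ t in pr.1..pr.2, P.eval t / gapWeight n b t) ≠ [] := by
      simpa using hGl
    simp only [gapIntegral] at hI0
    rcases hsign with hpos | hneg
    · have hterm : ∀ x ∈ (G l).map (fun pr => ∫ t in pr.1..pr.2, P.eval t / gapWeight n b t),
          0 < x := by
        intro x hx
        simp only [List.mem_map] at hx
        obtain ⟨pr, hpr, rfl⟩ := hx
        exact hPosPiece l pr hpr _ P.continuous hpos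
      have hsum := List.sum_pos _ hterm hmapne
      rcases hε l with h | h <;> rw [h] at hI0 <;> linarith
    · have hterm : ∀ x ∈ (G l).map (fun pr => ∫ t in pr.1..pr.2, P.eval t / gapWeight n b t),
          x < 0 := by
        intro x hx
        simp only [List.mem_map] at hx
        obtain ⟨pr, hpr, rfl⟩ := hx
        have hneg' := hPosPiece l pr hpr (fun t => -P.eval t) (by fun_prop)
          (fun t ht => neg_pos.mpr (hneg t ht))
        have heq : (∫ t in pr.1..pr.2, -P.eval t / gapWeight n b t) =
            -∫ t in pr.1..pr.2, P.eval t / gapWeight n b t := by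
          rw [← intervalIntegral.integral_neg]
          congr 1
          funext t
          ring
        rw [heq] at hneg'
        linarith
      have hsum := nd_list_sum_neg _ hterm hmapne
      rcases hε l with h | h <;> rw [h] at hI0 <;> linarith
  -- the matrix of the linear system
  set t0 : Fin n → ℝ := fun l => (a l + d l) / 2 with ht0
  have ht0mem : ∀ l, t0 l ∈ Set.Ioo (a l) (d l) := by
    intro l
    constructor <;> · simp only [ht0]; linarith [had l]
  set M : Matrix (Fin n) (Fin n) ℝ := fun l i =>
    if G l = [] then (t0 l) ^ (i : ℕ) else gapIntegral n b ε G l (fun t => t ^ (i : ℕ)) with hM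
  set poly : (Fin n → ℝ) → Polynomial ℝ :=
    fun c => ∑ i : Fin n, Polynomial.monomial (i : ℕ) (c i) with hpoly
  have hevalc : ∀ c t, (poly c).eval t = ∑ i, c i * t ^ (i : ℕ) := by
    intro c t
    simp [hpoly, Polynomial.eval_finset_sum]
  have hdeg : ∀ c, (poly c).natDegree ≤ n - 1 := by
    intro c
    apply Polynomial.natDegree_sum_le_of_forall_le
    intro i _
    exact (Polynomial.natDegree_monomial_le _).trans (by have := i.isLt; omega)
  have hcoeff : ∀ c (i : Fin n), (poly c).coeff (i : ℕ) = c i := by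
    intro c i
    have hpolyc : poly c = ∑ j : Fin n, Polynomial.monomial (j : ℕ) (c j) := rfl
    rw [hpolyc, Polynomial.finset_sum_coeff]
    rw [Finset.sum_eq_single i]
    · simp [Polynomial.coeff_monomial]
    · intro j _ hji
      rw [Polynomial.coeff_monomial, if_neg (by simpa [Fin.val_eq_val] using hji)]
    · simp
  have hkey : ∀ c l, M.mulVec c l =
      if G l = [] then (poly c).eval (t0 l)
      else gapIntegral n b ε G l (fun t => (poly c).eval t) := by
    intro c l
    by_cases hGl : G l = []
    · simp only [Matrix.mulVec, dotProduct, hM, if_pos hGl, hevalc]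
      exact Finset.sum_congr rfl (fun i _ => mul_comm _ _)
    · simp only [Matrix.mulVec, dotProduct, hM, if_neg hGl]
      have hint : ∀ pr ∈ G l, (∫ t in pr.1..pr.2, (poly c).eval t / gapWeight n b t) =
          ∑ i, c i * ∫ t in pr.1..pr.2, t ^ (i : ℕ) / gapWeight n b t := by
        intro pr hpr
        have h1 : (fun t => (poly c).eval t / gapWeight n b t) =
            fun t => ∑ i, c i * (t ^ (i : ℕ) / gapWeight n b t) := by
          funext t
          rw [hevalc, Finset.sum_div]
          exact Finset.sum_congr rfl (fun i _ => mul_div_assoc _ _ _)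
        rw [h1, intervalIntegral.integral_finset_sum]
        · exact Finset.sum_congr rfl (fun i _ => intervalIntegral.integral_const_mul _ _)
        · intro i _
          have := (hIntPiece l pr hpr (fun t => c i * t ^ (i : ℕ)) (by fun_prop))
          have heq2 : (fun t => (c i * t ^ (i : ℕ)) / gapWeight n b t) =
              fun t => c i * (t ^ (i : ℕ) / gapWeight n b t) := by
            funext t
            ring
          rwa [heq2] at this
      have h2 : ((G l).map fun pr => ∫ t in pr.1..pr.2, (poly c).eval t / gapWeight n b t) =
          (G l).map fun pr => ∑ i, c i * ∫ t in pr.1..pr.2, t ^ (i : ℕ) / gapWeight n b t :=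
        List.map_congr_left hint
      simp only [gapIntegral]
      rw [h2, nd_list_sum_swap]
      rw [Finset.mul_sum]
      refine Finset.sum_congr rfl (fun i _ => ?_)
      rw [nd_list_map_mul_left]
      ring
  -- injectivity of the linear system
  have h0 : ∀ c, M.mulVec c = 0 → c = 0 := by
    intro c hc
    have hr : ∀ l : Fin n, ∃ t ∈ Set.Ioo (a l) (d l), (poly c).eval t = 0 := by
      intro l
      have hcl : M.mulVec c l = 0 := by rw [hc]; rfl
      rw [hkey c l] at hcl
      by_cases hGl : G l = []
      · rw [if_pos hGl] at hcl
        exact ⟨t0 l, ht0mem l, hcl⟩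
      · rw [if_neg hGl] at hcl
        exact hroot (poly c) l hGl hcl
    choose r hr1 hr2 using hr
    have hrmono : StrictMono r := by
      intro l l' hll
      have h1 : (r l) < d l := (hr1 l).2
      have h2 : a l' < r l' := (hr1 l').1
      have h3 : d l ≤ a l' := by
        apply hb.monotone
        rw [Fin.le_def, hval2, hval1]
        have : (l : ℕ) < (l' : ℕ) := hll
        omega
      linarith
    have hP0 : poly c = 0 := by
      apply Polynomial.eq_zero_of_natDegree_lt_card_of_eval_eq_zero (poly c)
        hrmono.injective hr2
      rw [Fintype.card_fin]
      have := hdeg c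
      omega
    funext i
    have := hcoeff c i
    rw [hP0] at this
    simpa using this.symm
  have hinj : Function.Injective M.mulVecLin := by
    rw [← LinearMap.ker_eq_bot]
    rw [LinearMap.ker_eq_bot']
    intro c hc
    exact h0 c (by simpa [Matrix.mulVecLin_apply] using hc)
  have hsurj := LinearMap.injective_iff_surjective.mp hinj
  obtain ⟨c, hc⟩ := hsurj (fun l => if l = k then (1 : ℝ) else 0)
  refine ⟨poly c, hdeg c, ?_⟩
  intro l
  have hcl : M.mulVec c l = if l = k then (1 : ℝ) else 0 := by
    have := congrFun hc l
    simpa [Matrix.mulVecLin_apply] using this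
  by_cases hGl : G l = []
  · have hlk : l ≠ k := by
      intro h
      rw [h] at hGl
      exact hk hGl
    simp [gapIntegral, hGl, hlk]
  · rw [← (by rw [hkey c l, if_neg hGl] :
      M.mulVec c l = gapIntegral n b ε G l (fun t => (poly c).eval t)), hcl]
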